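/- arXiv:2103.00674 — 2 statements merged into one kernel-verified Lean document; each statement's English description precedes it below -/
import Mathlib

section
/- With N = 2^m cells of positive probabilities p_1, ..., p_N summing to 1, let μ be the vector of expectations of the N-1 nontrivial binary interactions and Σ_μ their second moment matrix (i.e., the submatrices of H p and H diag(p) H obtained by removing the row/column of the constant interaction). Then (1/N^2) ∑_{k=1}^N p_k^{-1} = (1 - μ^T Σ_μ^{-1} μ)^{-1}. -/
open Matrix Finset
def sylvesterHadamard (m : ℕ) : Matrix (Fin m → Bool) (Fin m → Bool) ℝ :=
  fun S k => ∏ i : Fin m, if S i ∧ k i then (-1 : ℝ) else 1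

lemma sH_symm (m : ℕ) (S T : Fin m → Bool) :
    sylvesterHadamard m S T = sylvesterHadamard m T S := by
  unfold sylvesterHadamard
  exact Finset.prod_congr rfl fun i _ => if_congr and_comm rfl rfl

lemma sH_z (m : ℕ) (k : Fin m → Bool) :
    sylvesterHadamard m (fun _ => false) k = 1 := by
  simp [sylvesterHadamard]

lemma bool_sum (a b : Bool) :
    ∑ x : Bool, (if a ∧ x then (-1:ℝ) else 1) * (if b ∧ x then (-1:ℝ) else 1) =
      if a = b then 2 else 0 := by
  cases a <;> cases b <;> simp [Fintype.sum_bool] <;> norm_num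

lemma sH_orth (m : ℕ) (S T : Fin m → Bool) :
    ∑ k, sylvesterHadamard m S k * sylvesterHadamard m T k =
      if S = T then (2:ℝ)^m else 0 := by
  have h1 : ∀ k : Fin m → Bool, sylvesterHadamard m S k * sylvesterHadamard m T k =
      ∏ i, ((if S i ∧ k i then (-1:ℝ) else 1) * (if T i ∧ k i then (-1:ℝ) else 1)) := by
    intro k; unfold sylvesterHadamard; exact (Finset.prod_mul_distrib).symm
  simp_rw [h1]
  rw [← Fintype.prod_sum (fun (i : Fin m) (x : Bool) => (if S i ∧ x then (-1:ℝ) else 1) * (if T i ∧ x then (-1:ℝ) else 1))]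
  simp_rw [bool_sum]
  by_cases h : S = T
  · subst h; simp
  · rw [if_neg h]
    obtain ⟨i, hi⟩ : ∃ i, S i ≠ T i := by
      by_contra hc; push_neg at hc; exact h (funext hc)
    exact Finset.prod_eq_zero (Finset.mem_univ i) (if_neg hi)

lemma sH_mul_sH (m : ℕ) :
    sylvesterHadamard m * sylvesterHadamard m = ((2:ℝ)^m) • (1 : Matrix (Fin m → Bool) (Fin m → Bool) ℝ) := by
  ext S T
  rw [Matrix.mul_apply]
  simp_rw [fun k => sH_symm m k T]
  rw [sH_orth]
  simp [Matrix.one_apply]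

lemma sum_ne_eq_sum {α : Type*} [Fintype α] [DecidableEq α] (z : α) (f : α → ℝ)
    (h0 : f z = 0) : ∑ x : {a : α // a ≠ z}, f x.1 = ∑ x, f x := by
  rw [← Finset.sum_subtype (Finset.filter (· ≠ z) Finset.univ)
        (by simp) f]
  exact Finset.sum_filter_of_ne (fun x _ hfx => by rintro rfl; exact hfx h0)

/-- Harmonic mean / Hotelling identity: with `N = 2^m` cells of positive probabilities
summing to 1, `μ` the mean vector of the `N-1` nontrivial interactions and `Σ_μ` their
second moment matrix, `(1/N²) ∑_k p_k⁻¹ = (1 - μ^T Σ_μ⁻¹ μ)⁻¹`. -/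
theorem harmonic_mean_hotelling (m : ℕ)
    (p : (Fin m → Bool) → ℝ) (hpos : ∀ k, 0 < p k) (hsum : ∑ k, p k = 1)
    (μ : {S : Fin m → Bool // S ≠ fun _ => false} → ℝ)
    (hμ : ∀ S, μ S = ((sylvesterHadamard m).mulVec p) S.1)
    (Sig : Matrix {S : Fin m → Bool // S ≠ fun _ => false}
      {S : Fin m → Bool // S ≠ fun _ => false} ℝ)
    (hSig : ∀ S T, Sig S T =
      (sylvesterHadamard m * Matrix.diagonal p * sylvesterHadamard m) S.1 T.1) :
    (1 / ((2 : ℝ) ^ m) ^ 2) * ∑ k, (p k)⁻¹ = (1 - μ ⬝ᵥ Sig⁻¹.mulVec μ)⁻¹ := by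
  classical
  have hp0 : ∀ k, p k ≠ 0 := fun k => (hpos k).ne'
  set N : ℝ := (2:ℝ)^m with hNdef
  have hN : N ≠ 0 := by positivity
  set s : ℝ := ∑ k, (p k)⁻¹ with hsdef
  have hs : 0 < s :=
    Finset.sum_pos (fun k _ => inv_pos.2 (hpos k)) ⟨fun _ => false, Finset.mem_univ _⟩
  set D' : Matrix (Fin m → Bool) (Fin m → Bool) ℝ :=
    Matrix.diagonal (fun k => (p k)⁻¹) with hD'
  set M : Matrix (Fin m → Bool) (Fin m → Bool) ℝ :=
    sylvesterHadamard m * Matrix.diagonal p * sylvesterHadamard m with hMdef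
  set Minv : Matrix (Fin m → Bool) (Fin m → Bool) ℝ :=
    (N⁻¹ * N⁻¹) • (sylvesterHadamard m * D' * sylvesterHadamard m) with hMinvdef
  have hHH : sylvesterHadamard m * sylvesterHadamard m = N • 1 := sH_mul_sH m
  -- M * Minv = 1
  have hMMinv : M * Minv = 1 := by
    rw [hMdef, hMinvdef, Matrix.mul_smul]
    have e1 : sylvesterHadamard m * Matrix.diagonal p * sylvesterHadamard m *
        (sylvesterHadamard m * D' * sylvesterHadamard m)
        = sylvesterHadamard m * (Matrix.diagonal p *
            ((sylvesterHadamard m * sylvesterHadamard m) * (D' * sylvesterHadamard m))) := by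
      simp only [Matrix.mul_assoc]
    rw [e1, hHH]
    simp only [Matrix.smul_mul, Matrix.mul_smul, Matrix.one_mul, smul_smul, hD']
    rw [← Matrix.mul_assoc (Matrix.diagonal p), Matrix.diagonal_mul_diagonal]
    have hdiag : (Matrix.diagonal (fun k => p k * (p k)⁻¹) :
        Matrix (Fin m → Bool) (Fin m → Bool) ℝ) = 1 := by
      rw [show (fun k => p k * (p k)⁻¹) = fun _ => (1:ℝ) from
        funext fun k => mul_inv_cancel₀ (hp0 k), Matrix.diagonal_one]
    rw [hdiag, Matrix.one_mul, hHH, smul_smul]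
    rw [show N⁻¹ * N⁻¹ * N * N = 1 by field_simp]
    rw [one_smul]
  -- entries of Minv
  have hent : ∀ S T, Minv S T =
      (N⁻¹ * N⁻¹) * ∑ k, sylvesterHadamard m S k * (p k)⁻¹ * sylvesterHadamard m k T := by
    intro S T
    rw [hMinvdef]
    simp only [Matrix.smul_apply, smul_eq_mul]
    congr 1
    rw [Matrix.mul_apply]
    exact Finset.sum_congr rfl fun k _ => by rw [hD', Matrix.mul_diagonal]
  have hMsymm : ∀ S T, Minv S T = Minv T S := by
    intro S T
    rw [hent, hent]
    congr 1
    exact Finset.sum_congr rfl fun k _ => by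
      rw [sH_symm m S k, sH_symm m k T]; ring
  set a : ℝ := Minv (fun _ => false) (fun _ => false) with hadef
  have haval : a = N⁻¹ * N⁻¹ * s := by
    rw [hadef, hent]
    congr 1
    rw [hsdef]
    exact Finset.sum_congr rfl fun k _ => by
      rw [sH_z, sH_symm, sH_z]; ring
  have ha0 : a ≠ 0 := by
    rw [haval]; positivity
  -- the vector v and u = Minv.mulVec v
  set v : (Fin m → Bool) → ℝ := (sylvesterHadamard m).mulVec p with hvdef
  set u : (Fin m → Bool) → ℝ := Minv.mulVec v with hudef
  have hvz : v (fun _ => false) = 1 := by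
    rw [hvdef]
    simp only [Matrix.mulVec, dotProduct]
    simp_rw [sH_z]
    simpa using hsum
  have hcard : ∑ _k : Fin m → Bool, (1:ℝ) = N := by
    simp [Finset.card_univ, hNdef]
  have hw : ∀ S, ((sylvesterHadamard m * D').mulVec p) S = if S = (fun _ => false) then N else 0 := by
    intro S
    have e1 : ((sylvesterHadamard m * D').mulVec p) S = ∑ k, sylvesterHadamard m S k := by
      simp only [Matrix.mulVec, dotProduct]
      refine Finset.sum_congr rfl fun k _ => ?_
      rw [hD', Matrix.mul_diagonal, mul_assoc, inv_mul_cancel₀ (hp0 k), mul_one]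
    rw [e1]
    have e2 : ∑ k, sylvesterHadamard m S k
        = ∑ k, sylvesterHadamard m S k * sylvesterHadamard m (fun _ => false) k := by
      refine Finset.sum_congr rfl fun k _ => ?_
      rw [sH_z, mul_one]
    rw [e2, sH_orth, hNdef]
  have huval : ∀ S, u S = N⁻¹ * (if S = (fun _ => false) then N else 0) := by
    intro S
    rw [hudef, hvdef, Matrix.mulVec_mulVec, hMinvdef]
    have e1 : (N⁻¹ * N⁻¹) • (sylvesterHadamard m * D' * sylvesterHadamard m) * sylvesterHadamard m
        = N⁻¹ • (sylvesterHadamard m * D') := by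
      rw [Matrix.smul_mul, Matrix.mul_assoc, Matrix.mul_assoc, ← Matrix.mul_assoc D',
        Matrix.mul_assoc D', hHH]
      simp only [Matrix.mul_smul, Matrix.mul_one, smul_smul]
      rw [show N⁻¹ * N⁻¹ * N = N⁻¹ by field_simp]
    rw [e1]
    simp only [Matrix.smul_mulVec, Pi.smul_apply, smul_eq_mul]
    rw [hw]
  have huz : u (fun _ => false) = 1 := by
    rw [huval]; simp [hN]
  have hvu : ∑ S, v S * u S = 1 := by
    have e : ∀ S, v S * u S = if S = (fun _ => false) then v S * (N⁻¹ * N) else 0 := by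
      intro S; rw [huval]; split <;> simp
    simp_rw [e]
    rw [Finset.sum_ite_eq' Finset.univ (fun _ => false) (fun S => v S * (N⁻¹ * N))]
    simp [hvz, inv_mul_cancel₀ hN]
  -- the Schur complement candidate inverse
  set Xf : Matrix (Fin m → Bool) (Fin m → Bool) ℝ :=
    Matrix.of fun S T => Minv S T - Minv S (fun _ => false) * Minv (fun _ => false) T / a
    with hXfdef
  have hXfapp : ∀ S T, Xf S T =
      Minv S T - Minv S (fun _ => false) * Minv (fun _ => false) T / a := fun S T => rfl
  have hXfz : ∀ S, Xf S (fun _ => false) = 0 := by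
    intro S
    rw [hXfapp, ← hadef, mul_div_cancel_right₀ _ ha0, sub_self]
  have hzXf : ∀ T, Xf (fun _ => false) T = 0 := by
    intro T
    rw [hXfapp, ← hadef, mul_div_cancel_left₀ _ ha0, sub_self]
  -- row identity : M * Xf has identity entries away from the base row/column
  have hrow : ∀ S T, ∑ U, M S U * Xf U T =
      (if S = T then 1 else 0) -
        (if S = (fun _ => false) then 1 else 0) * (Minv (fun _ => false) T / a) := by
    intro S T
    have h1 : ∑ U, M S U * Minv U T = (M * Minv) S T := (Matrix.mul_apply).symm
    have h2 : ∑ U, M S U * Minv U (fun _ => false) = (M * Minv) S (fun _ => false) :=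
      (Matrix.mul_apply).symm
    calc ∑ U, M S U * Xf U T
        = ∑ U, (M S U * Minv U T -
            (M S U * Minv U (fun _ => false)) * (Minv (fun _ => false) T / a)) := by
          refine Finset.sum_congr rfl fun U _ => ?_
          rw [hXfapp]; ring
      _ = (M * Minv) S T - (M * Minv) S (fun _ => false) * (Minv (fun _ => false) T / a) := by
          rw [Finset.sum_sub_distrib, ← Finset.sum_mul, h1, h2]
      _ = _ := by rw [hMMinv]; simp [Matrix.one_apply]
  -- the restricted matrix X is a right inverse of Sig
  set X : Matrix {S : Fin m → Bool // S ≠ fun _ => false}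
      {S : Fin m → Bool // S ≠ fun _ => false} ℝ :=
    Matrix.of fun S T => Xf S.1 T.1 with hXdef
  have hXapp : ∀ S T, X S T = Xf S.1 T.1 := fun S T => rfl
  have hSigX : Sig * X = 1 := by
    ext S T
    rw [Matrix.mul_apply]
    have e1 : ∀ U : {S : Fin m → Bool // S ≠ fun _ => false},
        Sig S U * X U T = M S.1 U.1 * Xf U.1 T.1 := by
      intro U; rw [hSig, hXapp]
    rw [Finset.sum_congr rfl fun U _ => e1 U]
    rw [sum_ne_eq_sum (fun _ => false) (fun U => M S.1 U * Xf U T.1)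
      (by beta_reduce; rw [hzXf, mul_zero])]
    rw [hrow, if_neg S.2, zero_mul, sub_zero]
    rw [Matrix.one_apply]
    by_cases h : S = T
    · rw [if_pos h, if_pos (congrArg Subtype.val h)]
    · rw [if_neg h, if_neg (fun hv => h (Subtype.ext hv))]
  have hSinv : Sig⁻¹ = X := Matrix.inv_eq_right_inv hSigX
  -- compute the quadratic form
  have hXfv : ∀ S, (Xf.mulVec v) S = u S - Minv S (fun _ => false) / a := by
    intro S
    have h1 : ∑ T, Minv S T * v T = u S := rfl
    have h2 : ∑ T, Minv (fun _ => false) T * v T = u (fun _ => false) := rfl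
    calc (Xf.mulVec v) S
        = ∑ T, (Minv S T * v T -
            (Minv S (fun _ => false) / a) * (Minv (fun _ => false) T * v T)) := by
          refine Finset.sum_congr rfl fun T _ => ?_
          beta_reduce; rw [hXfapp]; ring
      _ = u S - (Minv S (fun _ => false) / a) * u (fun _ => false) := by
          rw [Finset.sum_sub_distrib, ← Finset.mul_sum, h1, h2]
      _ = _ := by rw [huz, mul_one]
  have hform : μ ⬝ᵥ Sig⁻¹.mulVec μ = 1 - 1 / a := by
    rw [hSinv]
    have e1 : ∀ S : {S : Fin m → Bool // S ≠ fun _ => false},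
        (X.mulVec μ) S = (Xf.mulVec v) S.1 := by
      intro S
      rw [Matrix.mulVec, Matrix.mulVec]
      show ∑ T : {S : Fin m → Bool // S ≠ fun _ => false}, X S T * μ T = _
      rw [Finset.sum_congr rfl fun T _ => by rw [hXapp, hμ]]
      exact sum_ne_eq_sum (fun _ => false) (fun T => Xf S.1 T * v T)
        (by beta_reduce; rw [hXfz, zero_mul])
    show ∑ S : {S : Fin m → Bool // S ≠ fun _ => false}, μ S * (X.mulVec μ) S = 1 - 1 / a
    rw [Finset.sum_congr rfl fun S _ => by rw [hμ, e1 S]]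
    rw [sum_ne_eq_sum (fun _ => false) (fun S => v S * (Xf.mulVec v) S)
      (by
        have : (Xf.mulVec v) (fun _ => false) = 0 := by
          rw [Matrix.mulVec]
          show ∑ T, Xf (fun _ => false) T * v T = 0
          rw [Finset.sum_congr rfl fun T _ => by rw [hzXf, zero_mul]]
          exact Finset.sum_const_zero
        beta_reduce; rw [this, mul_zero])]
    have e2 : ∀ S, v S * (Xf.mulVec v) S =
        v S * u S - (v S * Minv S (fun _ => false)) / a := by
      intro S; rw [hXfv]; ring
    rw [Finset.sum_congr rfl fun S _ => e2 S, Finset.sum_sub_distrib, hvu]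
    congr 1
    rw [← Finset.sum_div]
    congr 1
    calc ∑ S, v S * Minv S (fun _ => false)
        = ∑ S, Minv (fun _ => false) S * v S := by
          refine Finset.sum_congr rfl fun S _ => ?_
          rw [hMsymm S]; ring
      _ = u (fun _ => false) := rfl
      _ = 1 := huz
  rw [hform, show (1:ℝ) - (1 - 1/a) = 1/a by ring,
    show ((1:ℝ)/a)⁻¹ = a by rw [one_div, inv_inv], haval, hsdef, hNdef]
  field_simp
end

section
/- Let U be a random vector in [-1,1]^p with depth-D binary approximations U_D (each coordinate U^j_D = ∑_{d=1}^D A^j_d/2^d with A^j_d ∈ {-1,1} and |U^j - U^j_D| ≤ 2^{-D}). Then for every t ∈ R^p, the characteristic function satisfies φ_U(t) = lim_{D→∞} ∑_{Λ ∈ B^{p×D}} Ψ_Λ(t) E[A_Λ], where the sum is over all p×D binary 0-1 matrices Λ, A_Λ = ∏_{j,d} (A^j_d)^{Λ_{jd}}, and Ψ_Λ(t) = ∏_{j=1}^p ∏_{d=1}^D cos(t_j/2^d)^{1-Λ_{jd}} (i sin(t_j/2^d))^{Λ_{jd}}. -/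
open MeasureTheory Filter Finset

lemma aux_integral_ofReal {α : Type*} [MeasurableSpace α] (μ : Measure α) (f : α → ℝ) :
    ((∫ a, f a ∂μ : ℝ) : ℂ) = ∫ a, ((f a : ℝ) : ℂ) ∂μ :=
  (integral_ofReal (𝕜 := ℂ)).symm

lemma aux_exp_pm (x a : ℝ) (ha : a = -1 ∨ a = 1) :
    Complex.exp (Complex.I * x * a) = Complex.cos x + Complex.I * Complex.sin x * a := by
  rcases ha with h | h <;> subst h
  · have : (Complex.I * x * ((-1:ℝ):ℂ)) = (-x : ℂ) * Complex.I := by push_cast; ring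
    rw [this, Complex.exp_mul_I, Complex.cos_neg, Complex.sin_neg]; push_cast; ring
  · have : (Complex.I * x * ((1:ℝ):ℂ)) = (x : ℂ) * Complex.I := by push_cast; ring
    rw [this, Complex.exp_mul_I]; push_cast; ring

lemma aux_sum_subsets {D : ℕ} (f g : Fin D → ℂ) :
    ∑ S : Finset (Fin D), ∏ d : Fin D, (if d ∈ S then f d else g d)
      = ∏ d : Fin D, (f d + g d) := by
  rw [Finset.prod_add, ← Finset.powerset_univ]
  refine Finset.sum_congr rfl fun S _ => ?_
  rw [Finset.prod_ite]
  congr 1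
  · congr 1; ext d; simp
  · congr 1; ext d; simp

lemma aux_pointwise (p D : ℕ) (t : Fin p → ℝ) (a : Fin p → ℕ → ℝ)
    (ha : ∀ j d, a j d = -1 ∨ a j d = 1) :
    ∑ Λ : Fin p → Finset (Fin D),
      ((∏ j : Fin p, ∏ d : Fin D,
          if d ∈ Λ j then Complex.I * Complex.sin ((t j / 2 ^ ((d : ℕ) + 1) : ℝ) : ℂ)
          else Complex.cos ((t j / 2 ^ ((d : ℕ) + 1) : ℝ) : ℂ)) *
        ((∏ j : Fin p, ∏ d ∈ Λ j, a j (d : ℕ) : ℝ) : ℂ))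
    = Complex.exp (Complex.I *
        ((∑ j : Fin p, t j * ∑ d ∈ Finset.range D, a j d / 2 ^ (d + 1) : ℝ) : ℂ)) := by
  -- rewrite RHS as a double product of exponentials
  have hrhs : Complex.exp (Complex.I *
        ((∑ j : Fin p, t j * ∑ d ∈ Finset.range D, a j d / 2 ^ (d + 1) : ℝ) : ℂ))
      = ∏ j : Fin p, ∏ d : Fin D,
          (Complex.cos ((t j / 2 ^ ((d : ℕ) + 1) : ℝ) : ℂ)
            + Complex.I * Complex.sin ((t j / 2 ^ ((d : ℕ) + 1) : ℝ) : ℂ) * (a j d : ℂ)) := by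
    push_cast
    rw [Finset.mul_sum, Complex.exp_sum]
    refine Finset.prod_congr rfl fun j _ => ?_
    rw [show (Complex.I * (↑(t j) * ∑ d ∈ Finset.range D, (a j d : ℂ) / 2 ^ (d + 1)))
        = ∑ d ∈ Finset.range D, Complex.I * (↑(t j) / 2 ^ (d+1)) * (a j d : ℂ) by
      rw [Finset.mul_sum, Finset.mul_sum]; refine Finset.sum_congr rfl fun d _ => ?_; ring]
    rw [Complex.exp_sum, ← Fin.prod_univ_eq_prod_range
      (fun d => Complex.exp (Complex.I * (↑(t j) / 2 ^ (d+1)) * (a j d : ℂ)))]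
    refine Finset.prod_congr rfl fun d _ => ?_
    rw [show ((↑(t j) / 2 ^ ((d:ℕ)+1) : ℂ)) = ((t j / 2 ^ ((d:ℕ)+1) : ℝ) : ℂ) by push_cast; ring]
    exact aux_exp_pm _ _ (ha j d)
  rw [hrhs]
  -- rewrite each summand as a single product over j
  have hterm : ∀ Λ : Fin p → Finset (Fin D),
      ((∏ j : Fin p, ∏ d : Fin D,
          if d ∈ Λ j then Complex.I * Complex.sin ((t j / 2 ^ ((d : ℕ) + 1) : ℝ) : ℂ)
          else Complex.cos ((t j / 2 ^ ((d : ℕ) + 1) : ℝ) : ℂ)) *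
        ((∏ j : Fin p, ∏ d ∈ Λ j, a j (d : ℕ) : ℝ) : ℂ))
      = ∏ j : Fin p, ∏ d : Fin D,
          (if d ∈ Λ j then
              Complex.I * Complex.sin ((t j / 2 ^ ((d : ℕ) + 1) : ℝ) : ℂ) * (a j d : ℂ)
            else Complex.cos ((t j / 2 ^ ((d : ℕ) + 1) : ℝ) : ℂ)) := by
    intro Λ
    push_cast
    rw [← Finset.prod_mul_distrib]
    refine Finset.prod_congr rfl fun j _ => ?_
    rw [show (∏ d ∈ Λ j, (a j (d:ℕ) : ℂ)) = ∏ d : Fin D, (if d ∈ Λ j then (a j (d:ℕ) : ℂ) else 1) by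
      rw [Finset.prod_ite_mem, Finset.univ_inter]]
    rw [← Finset.prod_mul_distrib]
    refine Finset.prod_congr rfl fun d _ => ?_
    split_ifs <;> ring
  simp only [hterm]
  rw [show (Finset.univ : Finset (Fin p → Finset (Fin D)))
      = Fintype.piFinset (fun _ => Finset.univ) by simp]
  rw [← Finset.prod_univ_sum (fun _ => (Finset.univ : Finset (Finset (Fin D))))
      (fun j S => ∏ d : Fin D,
        (if d ∈ S then
            Complex.I * Complex.sin ((t j / 2 ^ ((d : ℕ) + 1) : ℝ) : ℂ) * (a j d : ℂ)
          else Complex.cos ((t j / 2 ^ ((d : ℕ) + 1) : ℝ) : ℂ)))]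
  refine Finset.prod_congr rfl fun j _ => ?_
  rw [aux_sum_subsets]
  exact Finset.prod_congr rfl fun d _ => add_comm _ _

/-- BEAUTY equation: for a random vector `U` in `[-1,1]^p` with depth-`D` binary
approximations (coordinatewise `|Uʲ - ∑_{d=1}^D Aʲ_d/2^d| ≤ 2^{-D}` with `Aʲ_d ∈ {-1,1}`),
the characteristic function satisfies, for every `t ∈ ℝ^p`,
`φ_U(t) = lim_{D→∞} ∑_{Λ ∈ B^{p×D}} Ψ_Λ(t) E[A_Λ]`, where `A_Λ = ∏_{j,d∈Λ_j} Aʲ_d` and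
`Ψ_Λ(t) = ∏_{j,d} cos(t_j/2^d)^{1-Λ_{jd}} (i sin(t_j/2^d))^{Λ_{jd}}`. -/
theorem beauty_characteristic_function (p : ℕ)
    {Ω : Type*} [MeasurableSpace Ω] (P : Measure Ω) [IsProbabilityMeasure P]
    (U : Ω → (Fin p → ℝ)) (hUm : Measurable U)
    (A : Fin p → ℕ → Ω → ℝ) (hAm : ∀ j d, Measurable (A j d))
    (hAval : ∀ j d ω, A j d ω = -1 ∨ A j d ω = 1)
    (happrox : ∀ j ω (D : ℕ),
      |U ω j - ∑ d ∈ Finset.range D, A j d ω / 2 ^ (d + 1)| ≤ 2⁻¹ ^ D)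
    (t : Fin p → ℝ) :
    Tendsto
      (fun D : ℕ =>
        ∑ Λ : Fin p → Finset (Fin D),
          ((∏ j : Fin p, ∏ d : Fin D,
              if d ∈ Λ j then Complex.I * Complex.sin ((t j / 2 ^ ((d : ℕ) + 1) : ℝ) : ℂ)
              else Complex.cos ((t j / 2 ^ ((d : ℕ) + 1) : ℝ) : ℂ)) *
            ((∫ ω, ∏ j : Fin p, ∏ d ∈ Λ j, A j (d : ℕ) ω ∂P : ℝ) : ℂ)))
      atTop
      (nhds (∫ ω, Complex.exp (Complex.I * ((∑ j : Fin p, t j * U ω j : ℝ) : ℂ)) ∂P)) := by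
  -- the truncated sums
  set S : ℕ → Ω → ℝ := fun D ω => ∑ j : Fin p, t j * ∑ d ∈ Finset.range D, A j d ω / 2 ^ (d + 1)
    with hS
  have hSm : ∀ D, Measurable (S D) := by
    intro D
    exact Finset.measurable_sum _ fun j _ =>
      (Finset.measurable_sum _ fun d _ => (hAm j d).div_const _).const_mul _
  -- integrability of the A_Λ products
  have hAΛint : ∀ (D : ℕ) (Λ : Fin p → Finset (Fin D)),
      Integrable (fun ω => ∏ j : Fin p, ∏ d ∈ Λ j, A j (d : ℕ) ω) P := by
    intro D Λ
    have hm : Measurable fun ω => ∏ j : Fin p, ∏ d ∈ Λ j, A j (d : ℕ) ω :=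
      Finset.measurable_prod _ fun j _ => Finset.measurable_prod _ fun d _ => hAm j d
    refine (integrable_const (1 : ℝ)).mono' hm.aestronglyMeasurable ?_
    filter_upwards with ω
    rw [Real.norm_eq_abs, abs_prod]
    refine le_of_eq (Finset.prod_eq_one fun j _ => ?_) |>.trans_eq rfl |>.trans (le_refl 1)
    rw [abs_prod]
    refine Finset.prod_eq_one fun d _ => ?_
    rcases hAval j d ω with h | h <;> simp [h]
  -- the sum equals the integral of exp(i t·U_D)
  have key : ∀ D : ℕ,
      (∑ Λ : Fin p → Finset (Fin D),
        ((∏ j : Fin p, ∏ d : Fin D,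
            if d ∈ Λ j then Complex.I * Complex.sin ((t j / 2 ^ ((d : ℕ) + 1) : ℝ) : ℂ)
            else Complex.cos ((t j / 2 ^ ((d : ℕ) + 1) : ℝ) : ℂ)) *
          ((∫ ω, ∏ j : Fin p, ∏ d ∈ Λ j, A j (d : ℕ) ω ∂P : ℝ) : ℂ)))
      = ∫ ω, Complex.exp (Complex.I * ((S D ω : ℝ) : ℂ)) ∂P := by
    intro D
    have step1 : ∀ Λ : Fin p → Finset (Fin D),
        ((∏ j : Fin p, ∏ d : Fin D,
            if d ∈ Λ j then Complex.I * Complex.sin ((t j / 2 ^ ((d : ℕ) + 1) : ℝ) : ℂ)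
            else Complex.cos ((t j / 2 ^ ((d : ℕ) + 1) : ℝ) : ℂ)) *
          ((∫ ω, ∏ j : Fin p, ∏ d ∈ Λ j, A j (d : ℕ) ω ∂P : ℝ) : ℂ))
        = ∫ ω, ((∏ j : Fin p, ∏ d : Fin D,
            if d ∈ Λ j then Complex.I * Complex.sin ((t j / 2 ^ ((d : ℕ) + 1) : ℝ) : ℂ)
            else Complex.cos ((t j / 2 ^ ((d : ℕ) + 1) : ℝ) : ℂ)) *
          ((∏ j : Fin p, ∏ d ∈ Λ j, A j (d : ℕ) ω : ℝ) : ℂ)) ∂P := by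
      intro Λ
      rw [MeasureTheory.integral_const_mul, aux_integral_ofReal]
    simp only [step1]
    rw [← MeasureTheory.integral_finset_sum]
    · refine integral_congr_ae (Filter.Eventually.of_forall fun ω => ?_)
      exact aux_pointwise p D t (fun j d => A j d ω) (fun j d => hAval j d ω)
    · intro Λ _
      exact (((hAΛint D Λ).ofReal (𝕜 := ℂ))).const_mul _
  simp only [key]
  -- dominated convergence
  refine MeasureTheory.tendsto_integral_of_dominated_convergence (fun _ => 1) ?_ ?_ ?_ ?_
  · intro D
    exact (Complex.measurable_exp.comp
      (measurable_const.mul (Complex.measurable_ofReal.comp (hSm D)))).aestronglyMeasurable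
  · exact integrable_const 1
  · intro D
    filter_upwards with ω
    rw [Complex.norm_exp]
    simp
  · filter_upwards with ω
    have hj : ∀ j : Fin p, Tendsto (fun D => ∑ d ∈ Finset.range D, A j d ω / 2 ^ (d + 1))
        atTop (nhds (U ω j)) := by
      intro j
      rw [tendsto_iff_dist_tendsto_zero]
      refine squeeze_zero (fun D => dist_nonneg) (fun D => ?_)
        (tendsto_pow_atTop_nhds_zero_of_lt_one (r := (2⁻¹ : ℝ)) (by norm_num) (by norm_num))
      rw [Real.dist_eq, abs_sub_comm]
      exact happrox j ω D
    have hSlim : Tendsto (fun D => S D ω) atTop (nhds (∑ j : Fin p, t j * U ω j)) :=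
      tendsto_finset_sum _ fun j _ => ((hj j).const_mul _)
    exact ((Complex.continuous_exp.comp
      (continuous_const.mul Complex.continuous_ofReal)).tendsto _).comp hSlim
end
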